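/- Let $0 < d \le 1 \le u$ with $u \ne d$, and set $\tilde{k}_0(n,u,d) = \lfloor n \ln(1/d)/\ln(u/d) \rfloor$. Then $A(n,u,d) = (1/2)^n \sum_{k=0}^{\tilde{k}_0(n,u,d)} \binom{n}{k} u^k d^{n-k} \to 0$ as $n \to \infty$. -/

import Mathlib

open Filter

/-- Key analytic inequality: concavity-type bound giving strict improvement over 2. -/
lemma key_ineq {a t : ℝ} (ha : 0 < a) (ht : 0 < t) (ht1 : t ≠ 1)
    (h : 0 ≤ (t - 1) * (2 * a - t)) : 1 + t < 2 * t ^ a := by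
  have hlog : (t - 1) / t < Real.log t := by
    have h1 : Real.log t⁻¹ < t⁻¹ - 1 :=
      Real.log_lt_sub_one_of_pos (by positivity) (by simpa using ht1)
    rw [Real.log_inv] at h1
    have ht' : t ≠ 0 := ht.ne'
    have : (t - 1)/t = 1 - t⁻¹ := by field_simp
    rw [this]; linarith
  have h2 : t - 1 < 2 * a * Real.log t := by
    have hm : 2 * a * ((t-1)/t) < 2 * a * Real.log t :=
      mul_lt_mul_of_pos_left hlog (by positivity)
    have halg : t - 1 ≤ 2 * a * ((t-1)/t) := by
      rw [mul_div_assoc', le_div_iff₀ ht]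
      nlinarith
    linarith
  have h3 : t ^ a = Real.exp (Real.log t * a) := Real.rpow_def_of_pos ht a
  have h4 : Real.log t * a + 1 ≤ Real.exp (Real.log t * a) := Real.add_one_le_exp _
  rw [h3]; nlinarith

/-- Chernoff tilt bound for the lower tail of the binomial-type sum. -/
lemma sum_le_tilt (n m : ℕ) (u d y : ℝ) (hu : 0 ≤ u) (hd : 0 ≤ d) (hy : 0 < y) (hy1 : y ≤ 1) :
    ∑ k ∈ Finset.range (m+1), (n.choose k : ℝ) * u^k * d^(n-k)
      ≤ (y⁻¹)^m * (u*y + d)^n := by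
  have huy : 0 ≤ u * y := by positivity
  have step1 : ∑ k ∈ Finset.range (m+1), (n.choose k : ℝ) * u^k * d^(n-k)
      ≤ ∑ k ∈ Finset.range (m+1), (y⁻¹)^m * ((n.choose k : ℝ) * (u*y)^k * d^(n-k)) := by
    apply Finset.sum_le_sum
    intro k hk
    have hk' : k ≤ m := Nat.lt_succ_iff.mp (Finset.mem_range.mp hk)
    have h1 : (1:ℝ) ≤ y⁻¹^m * y^k := by
      have h2 : y^m ≤ y^k := pow_le_pow_of_le_one hy.le hy1 hk'
      have h3 : y⁻¹^m * y^m ≤ y⁻¹^m * y^k :=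
        mul_le_mul_of_nonneg_left h2 (by positivity)
      have h4 : y⁻¹^m * y^m = 1 := by
        rw [← mul_pow, inv_mul_cancel₀ hy.ne', one_pow]
      linarith
    have hterm : (0:ℝ) ≤ (n.choose k : ℝ) * u^k * d^(n-k) := by positivity
    calc (n.choose k:ℝ) * u^k * d^(n-k)
        ≤ (y⁻¹^m * y^k) * ((n.choose k:ℝ) * u^k * d^(n-k)) := le_mul_of_one_le_left hterm h1
      _ = y⁻¹^m * ((n.choose k:ℝ) * (u*y)^k * d^(n-k)) := by rw [mul_pow]; ring
  have step2 : ∑ k ∈ Finset.range (m+1), ((n.choose k : ℝ) * (u*y)^k * d^(n-k))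
      ≤ ∑ k ∈ Finset.range (m+n+1), ((n.choose k : ℝ) * (u*y)^k * d^(n-k)) := by
    apply Finset.sum_le_sum_of_subset_of_nonneg
    · exact Finset.range_subset_range.mpr (by omega)
    · intro k _ _; positivity
  have step3 : ∑ k ∈ Finset.range (m+n+1), ((n.choose k : ℝ) * (u*y)^k * d^(n-k))
      = ∑ k ∈ Finset.range (n+1), ((n.choose k : ℝ) * (u*y)^k * d^(n-k)) := by
    symm
    apply Finset.sum_subset (Finset.range_subset_range.mpr (by omega))
    intro k _ hk
    have hnk : n < k := by
      simp only [Finset.mem_range] at hk; omega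
    rw [Nat.choose_eq_zero_of_lt hnk]
    simp
  have step4 : ∑ k ∈ Finset.range (n+1), ((n.choose k : ℝ) * (u*y)^k * d^(n-k))
      = (u*y + d)^n := by
    rw [add_pow]
    apply Finset.sum_congr rfl
    intro k _; ring
  calc ∑ k ∈ Finset.range (m+1), (n.choose k : ℝ) * u^k * d^(n-k)
      ≤ ∑ k ∈ Finset.range (m+1), (y⁻¹)^m * ((n.choose k : ℝ) * (u*y)^k * d^(n-k)) := step1
    _ = (y⁻¹)^m * ∑ k ∈ Finset.range (m+1), ((n.choose k : ℝ) * (u*y)^k * d^(n-k)) := by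
        rw [Finset.mul_sum]
    _ ≤ (y⁻¹)^m * ∑ k ∈ Finset.range (m+n+1), ((n.choose k : ℝ) * (u*y)^k * d^(n-k)) := by
        apply mul_le_mul_of_nonneg_left step2 (by positivity)
    _ = (y⁻¹)^m * (u*y + d)^n := by rw [step3, step4]

/-- Elementary upper bound on the square of the central binomial coefficient. -/
lemma cb_sq (m : ℕ) : (2*m+1) * (Nat.centralBinom m)^2 ≤ 16^m := by
  induction m with
  | zero => simp [Nat.centralBinom]
  | succ m ih =>
    have key : (m + 1) * Nat.centralBinom (m + 1) = 2 * (2 * m + 1) * Nat.centralBinom m :=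
      Nat.succ_mul_centralBinom_succ m
    have h2 : (2*(m+1)+1) * Nat.centralBinom (m+1)^2 * (m+1)^2 ≤ 16^(m+1) * (m+1)^2 := by
      calc (2*(m+1)+1) * Nat.centralBinom (m+1)^2 * (m+1)^2
          = (2*(m+1)+1) * ((m+1) * Nat.centralBinom (m+1))^2 := by ring
        _ = (2*(m+1)+1) * (2*(2*m+1)*Nat.centralBinom m)^2 := by rw [key]
        _ = 4*(2*m+1)*(2*(m+1)+1) * ((2*m+1) * Nat.centralBinom m^2) := by ring
        _ ≤ 4*(2*m+1)*(2*(m+1)+1) * 16^m := Nat.mul_le_mul_left _ ih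
        _ ≤ (16*(m+1)^2) * 16^m := Nat.mul_le_mul_right _ (by nlinarith)
        _ = 16^(m+1) * (m+1)^2 := by ring
    exact Nat.le_of_mul_le_mul_right h2 (by positivity)

lemma choose_odd_le (m : ℕ) : (2*m+1).choose m ≤ 2 * Nat.centralBinom m := by
  cases m with
  | zero => simp [Nat.centralBinom]
  | succ m =>
    have e1 : 2*(m+1)+1 = (2*m+2)+1 := by ring
    rw [e1, Nat.choose_succ_succ (2*m+2) m]
    have h1 : (2*m+2).choose m ≤ (2*m+2).choose (m+1) := by
      have h := Nat.choose_le_middle m (2*m+2)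
      have e2 : (2*m+2)/2 = m+1 := by omega
      rwa [e2] at h
    have h2 : (2*m+2).choose (m+1) = Nat.centralBinom (m+1) := by
      rw [Nat.centralBinom]; congr 1
    show (2*m+2).choose m + (2*m+2).choose (m+1) ≤ 2 * Nat.centralBinom (m+1)
    omega

lemma nat_middle (n : ℕ) : n * (n.choose (n/2))^2 ≤ 4^n := by
  rcases Nat.even_or_odd n with ⟨m, hm⟩ | ⟨m, hm⟩
  · subst hm
    have h1 : (m+m)/2 = m := by omega
    rw [h1]
    have hcb : (m+m).choose m = Nat.centralBinom m := by
      rw [Nat.centralBinom]; congr 1; ring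
    rw [hcb]
    calc (m+m) * Nat.centralBinom m^2 ≤ (2*m+1) * Nat.centralBinom m^2 :=
          Nat.mul_le_mul_right _ (by omega)
      _ ≤ 16^m := cb_sq m
      _ = 4^(m+m) := by rw [show (16:ℕ) = 4^2 by norm_num, ← pow_mul]; congr 1; omega
  · subst hm
    have h1 : (2*m+1)/2 = m := by omega
    rw [h1]
    calc (2*m+1) * ((2*m+1).choose m)^2
        ≤ (2*m+1) * (2*Nat.centralBinom m)^2 :=
          Nat.mul_le_mul_left _ (Nat.pow_le_pow_left (choose_odd_le m) 2)
      _ = 4 * ((2*m+1) * Nat.centralBinom m^2) := by ring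
      _ ≤ 4 * 16^m := Nat.mul_le_mul_left _ (cb_sq m)
      _ = 4^(2*m+1) := by rw [show (16:ℕ) = 4^2 by norm_num, ← pow_mul, pow_succ, Nat.mul_comm]

lemma middle_real (n : ℕ) (hn : 1 ≤ n) :
    (n.choose (n/2) : ℝ) / 2^n ≤ Real.sqrt (1/n) := by
  have h0 : (0:ℝ) < n := by exact_mod_cast hn
  have key : ((n.choose (n/2) : ℝ) / 2^n)^2 ≤ 1/n := by
    rw [div_pow, div_le_div_iff₀ (by positivity) h0, one_mul]
    have hcast : ((n.choose (n/2) : ℝ))^2 * n = ((n * (n.choose (n/2))^2 : ℕ) : ℝ) := by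
      push_cast; ring
    rw [hcast]
    calc ((n * (n.choose (n/2))^2 : ℕ) : ℝ) ≤ ((4^n : ℕ) : ℝ) := by
          exact_mod_cast nat_middle n
      _ = ((2:ℝ)^n)^2 := by
          push_cast
          rw [show (4:ℝ) = 2^2 by norm_num, ← pow_mul, ← pow_mul, Nat.mul_comm]
  calc (n.choose (n/2):ℝ)/2^n
      = Real.sqrt (((n.choose (n/2):ℝ)/2^n)^2) := (Real.sqrt_sq (by positivity)).symm
    _ ≤ Real.sqrt (1/n) := Real.sqrt_le_sqrt key

/-- Threshold separating losing from winning numbers of heads. -/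
noncomputable def ktilde (n : ℕ) (u d : ℝ) : ℕ :=
  ⌊(n : ℝ) * Real.log (1/d) / Real.log (u/d)⌋₊

/-- Contribution of the losing outcomes to the expected payout (fair coin). -/
noncomputable def A (n : ℕ) (u d : ℝ) : ℝ :=
  (1/2 : ℝ)^n * ∑ k ∈ Finset.range (ktilde n u d + 1), (n.choose k : ℝ) * u^k * d^(n-k)

lemma A_nonneg (n : ℕ) (u d : ℝ) (hu : 0 ≤ u) (hd : 0 ≤ d) : 0 ≤ A n u d := by
  unfold A
  apply mul_nonneg (by positivity)
  apply Finset.sum_nonneg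
  intro k _; positivity

theorem losing_contribution_tendsto_zero (u d : ℝ)
    (hd0 : 0 < d) (hd1 : d ≤ 1) (hu : 1 ≤ u) (hne : u ≠ d) :
    Tendsto (fun n : ℕ => A n u d) atTop (nhds 0) := by
  have hu0 : 0 < u := lt_of_lt_of_le zero_lt_one hu
  by_cases hdeq : d = 1
  · -- trivial case d = 1
    subst hdeq
    have hA : ∀ n : ℕ, A n u 1 = (1/2:ℝ)^n := by
      intro n
      have hk : ktilde n u 1 = 0 := by simp [ktilde]
      simp [A, hk]
    simp only [hA]
    exact tendsto_pow_atTop_nhds_zero_of_lt_one (by norm_num) (by norm_num)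
  · have hdlt : d < 1 := lt_of_le_of_ne hd1 hdeq
    have hdu : d < u := hdlt.trans_le hu
    have hud1 : 1 < u/d := (one_lt_div hd0).mpr hdu
    have hL : 0 < Real.log (u/d) := Real.log_pos hud1
    by_cases hud : u * d = 1
    · -- boundary case: u * d = 1
      have hu1 : 1 < u := by
        rcases eq_or_lt_of_le hu with h | h
        · exfalso; rw [← h, one_mul] at hud; exact hdeq hud
        · exact h
      have hd_eq : d = u⁻¹ := by
        field_simp
        linarith [hud]
      have hk : ∀ n : ℕ, ktilde n u d = n / 2 := by
        intro n
        rw [ktilde, hd_eq]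
        have h1 : (1:ℝ)/u⁻¹ = u := by field_simp
        have h2 : u/u⁻¹ = u*u := by field_simp
        have hlogu : 0 < Real.log u := Real.log_pos hu1
        rw [h1, h2, Real.log_mul hu0.ne' hu0.ne']
        have h3 : (n:ℝ) * Real.log u / (Real.log u + Real.log u) = n / 2 := by
          field_simp; ring
        rw [h3, show ((2:ℝ)) = ((2:ℕ):ℝ) by norm_num, Nat.floor_div_natCast, Nat.floor_natCast]
      set K : ℝ := u^2/(u^2-1) with hK
      have hu2 : 1 < u^2 := by nlinarith
      have hK0 : 0 < K := div_pos (by positivity) (by linarith)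
      have hbound : ∀ n : ℕ, A n u d ≤ K * ((n.choose (n/2):ℝ)/2^n) := by
        intro n
        have hS : ∑ k ∈ Finset.range (n/2+1), (n.choose k : ℝ) * u^k * d^(n-k)
            ≤ (n.choose (n/2):ℝ) * K := by
          have hterm : ∀ k ∈ Finset.range (n/2+1),
              (n.choose k:ℝ)*u^k*d^(n-k) ≤ (n.choose (n/2):ℝ) * ((u^2)^k / u^n) := by
            intro k hk'
            have hkle : k ≤ n/2 := Nat.lt_succ_iff.mp (Finset.mem_range.mp hk')
            have hk_n : k ≤ n := le_trans hkle (Nat.div_le_self n 2)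
            have hchoose : (n.choose k:ℝ) ≤ (n.choose (n/2):ℝ) := by
              exact_mod_cast Nat.choose_le_middle k n
            have hne' : (u:ℝ)^(n-k) ≠ 0 := by positivity
            have hsplit : u^k * d^(n-k) = (u^2)^k / u^n := by
              rw [hd_eq, inv_pow, eq_div_iff (by positivity : (u:ℝ)^n ≠ 0),
                show u^n = u^(n-k) * u^k from by rw [← pow_add]; congr 1; omega]
              calc u^k * (u^(n-k))⁻¹ * (u^(n-k) * u^k)
                  = (u^(n-k))⁻¹ * u^(n-k) * (u^k * u^k) := by ring
                _ = u^k * u^k := by rw [inv_mul_cancel₀ hne', one_mul]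
                _ = (u^2)^k := by ring
            calc (n.choose k:ℝ)*u^k*d^(n-k) = (n.choose k:ℝ)*(u^k*d^(n-k)) := by ring
              _ ≤ (n.choose (n/2):ℝ)*(u^k*d^(n-k)) := by
                  apply mul_le_mul_of_nonneg_right hchoose (by positivity)
              _ = (n.choose (n/2):ℝ) * ((u^2)^k / u^n) := by rw [hsplit]
          have hgeom : ∑ k ∈ Finset.range (n/2+1), ((u:ℝ)^2)^k ≤ u^(n+2) / (u^2-1) := by
            rw [geom_sum_eq (by nlinarith : (u:ℝ)^2 ≠ 1)]
            have hp : ((u:ℝ)^2)^(n/2+1) ≤ u^(n+2) := by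
              rw [← pow_mul]
              exact pow_le_pow_right₀ (by linarith) (by omega)
            have hden : (0:ℝ) < u^2 - 1 := by linarith
            exact (div_le_div_iff_of_pos_right hden).mpr (by linarith)
          calc ∑ k ∈ Finset.range (n/2+1), (n.choose k : ℝ) * u^k * d^(n-k)
              ≤ ∑ k ∈ Finset.range (n/2+1), (n.choose (n/2):ℝ) * ((u^2)^k / u^n) :=
                Finset.sum_le_sum hterm
            _ = (n.choose (n/2):ℝ)/u^n * ∑ k ∈ Finset.range (n/2+1), ((u:ℝ)^2)^k := by
                rw [Finset.mul_sum]; apply Finset.sum_congr rfl; intro k _; ring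
            _ ≤ (n.choose (n/2):ℝ)/u^n * (u^(n+2)/(u^2-1)) := by
                apply mul_le_mul_of_nonneg_left hgeom (by positivity)
            _ = (n.choose (n/2):ℝ) * K := by
                rw [hK, show (u:ℝ)^(n+2) = u^n * u^2 from by rw [← pow_add]]
                have hun : (u:ℝ)^n ≠ 0 := by positivity
                have hden2 : (u:ℝ)^2 - 1 ≠ 0 := by nlinarith
                field_simp
        unfold A
        rw [hk n]
        calc (1/2:ℝ)^n * ∑ k ∈ Finset.range (n/2+1), (n.choose k : ℝ) * u^k * d^(n-k)
            ≤ (1/2:ℝ)^n * ((n.choose (n/2):ℝ) * K) :=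
              mul_le_mul_of_nonneg_left hS (by positivity)
          _ = K * ((n.choose (n/2):ℝ)/2^n) := by
              rw [div_pow, one_pow]; ring
      have hev : ∀ᶠ n in atTop, A n u d ≤ K * Real.sqrt (1/n) := by
        rw [eventually_atTop]
        exact ⟨1, fun n hn => le_trans (hbound n)
          (mul_le_mul_of_nonneg_left (middle_real n hn) hK0.le)⟩
      have hlim : Tendsto (fun n:ℕ => K * Real.sqrt (1/n)) atTop (nhds 0) := by
        have h1 : Tendsto (fun n:ℕ => (1:ℝ)/n) atTop (nhds 0) :=
          tendsto_one_div_atTop_nhds_zero_nat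
        have h2 : Tendsto (fun n:ℕ => Real.sqrt ((1:ℝ)/n)) atTop (nhds (Real.sqrt 0)) :=
          (Real.continuous_sqrt.tendsto 0).comp h1
        rw [Real.sqrt_zero] at h2
        simpa using h2.const_mul K
      exact squeeze_zero' (Eventually.of_forall (fun n => A_nonneg n u d hu0.le hd0.le))
        hev hlim
    · -- main case: Chernoff bound
      have h1d : (1:ℝ) < 1/d := by rw [lt_div_iff₀ hd0]; linarith
      set α := Real.log (1/d) / Real.log (u/d) with hα_def
      have hα0 : 0 < α := div_pos (Real.log_pos h1d) hL
      have hαhalf : α ≠ 1/2 := by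
        intro h
        apply hud
        rw [hα_def] at h
        rw [div_eq_div_iff hL.ne' two_ne_zero] at h
        have h3 : 2 * Real.log (1/d) = Real.log (u/d) := by linarith
        rw [Real.log_div one_ne_zero hd0.ne', Real.log_div hu0.ne' hd0.ne',
          Real.log_one] at h3
        have h4 : Real.log (u*d) = 0 := by
          rw [Real.log_mul hu0.ne' hd0.ne']; linarith
        have h5 := Real.exp_log (by positivity : (0:ℝ) < u*d)
        rw [h4, Real.exp_zero] at h5
        linarith [h5]
      set t := min (α + 1/2) (u/d) with ht_def
      have ht0 : 0 < t := lt_min (by linarith) (by linarith)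
      have htu : t ≤ u/d := min_le_right _ _
      have hcond : t ≠ 1 ∧ 0 ≤ (t-1)*(2*α - t) := by
        rcases lt_or_gt_of_ne hαhalf with h | h
        · have he : t = α + 1/2 := min_eq_left (by linarith)
          constructor
          · rw [he]; intro hc; linarith
          · rw [he]; nlinarith
        · have h1t : 1 < t := lt_min (by linarith) hud1
          have h2t : t ≤ 2*α := le_trans (min_le_left _ _) (by linarith)
          exact ⟨ne_of_gt h1t, by nlinarith⟩
      have hkey : 1 + t < 2 * t ^ α := key_ineq hα0 ht0 hcond.1 hcond.2
      set y := t * d / u with hy_def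
      have hy0 : 0 < y := by rw [hy_def]; positivity
      have hy1 : y ≤ 1 := by
        rw [hy_def, div_le_one hu0]
        calc t * d ≤ (u/d) * d := mul_le_mul_of_nonneg_right htu hd0.le
          _ = u := by field_simp
      have hyinv : (1:ℝ) ≤ y⁻¹ := by
        nlinarith [mul_nonneg (sub_nonneg.mpr hy1) (inv_pos.mpr hy0).le,
          mul_inv_cancel₀ hy0.ne']
      have hyinv0 : (0:ℝ) ≤ y⁻¹ := by linarith
      have h_uyd : (0:ℝ) ≤ u*y + d := by
        have := mul_nonneg hu0.le hy0.le; linarith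
      set c := (1/2:ℝ) * ((u*y + d) * (y⁻¹) ^ α) with hc_def
      have hrpow0 : (0:ℝ) ≤ (y⁻¹)^α := Real.rpow_nonneg hyinv0 α
      have hc0 : 0 ≤ c := by
        rw [hc_def]
        apply mul_nonneg (by norm_num) (mul_nonneg h_uyd hrpow0)
      have huy_eq : u * y = t * d := by
        rw [hy_def, mul_comm]
        exact div_mul_cancel₀ _ hu0.ne'
      have huyd : u * y + d = d * (1 + t) := by
        rw [huy_eq]; ring
      have hyinv_val : (y⁻¹) ^ α = d⁻¹ * (t ^ α)⁻¹ := by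
        have hyiv : y⁻¹ = (u/d) * t⁻¹ := by
          rw [hy_def, inv_div, mul_comm t d, ← div_div, div_eq_mul_inv (u/d) t]
        rw [hyiv, Real.mul_rpow (div_nonneg hu0.le hd0.le) (inv_nonneg.mpr ht0.le),
          Real.inv_rpow ht0.le]
        congr 1
        rw [Real.rpow_def_of_pos (div_pos hu0 hd0)]
        have he : Real.log (u/d) * α = Real.log d⁻¹ := by
          rw [hα_def, one_div]
          field_simp [hL.ne']
        rw [he, Real.exp_log (inv_pos.mpr hd0)]
      have hbound : ∀ n : ℕ, A n u d ≤ c^n := by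
        intro n
        have hS := sum_le_tilt n (ktilde n u d) u d y hu0.le hd0.le hy0 hy1
        have hm : ((ktilde n u d : ℝ)) ≤ α * n := by
          have h1 : ((ktilde n u d : ℝ)) ≤ (n:ℝ) * Real.log (1/d) / Real.log (u/d) :=
            Nat.floor_le (div_nonneg (mul_nonneg (Nat.cast_nonneg n)
              (Real.log_pos h1d).le) hL.le)
          calc ((ktilde n u d : ℝ)) ≤ (n:ℝ) * Real.log (1/d) / Real.log (u/d) := h1
            _ = α * n := by rw [hα_def]; ring
        have hstep : (y⁻¹)^(ktilde n u d) ≤ ((y⁻¹)^α)^n := by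
          rw [← Real.rpow_natCast y⁻¹ (ktilde n u d), ← Real.rpow_natCast ((y⁻¹)^α) n,
            ← Real.rpow_mul hyinv0]
          exact Real.rpow_le_rpow_of_exponent_le hyinv hm
        calc A n u d ≤ (1/2:ℝ)^n * ((y⁻¹)^(ktilde n u d) * (u*y+d)^n) := by
              unfold A
              exact mul_le_mul_of_nonneg_left hS (by positivity)
          _ ≤ (1/2:ℝ)^n * (((y⁻¹)^α)^n * (u*y+d)^n) := by
              apply mul_le_mul_of_nonneg_left _ (by positivity)
              exact mul_le_mul_of_nonneg_right hstep (pow_nonneg h_uyd n)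
          _ = c^n := by rw [hc_def, mul_pow, mul_pow]; ring
      have hc1 : c < 1 := by
        rw [hc_def, huyd, hyinv_val]
        have htα : (0:ℝ) < t ^ α := Real.rpow_pos_of_pos ht0 α
        have he : (1/2:ℝ) * (d * (1+t) * (d⁻¹ * (t^α)⁻¹)) = (1+t)/(2*t^α) := by
          field_simp
        rw [he, div_lt_one (by positivity)]
        linarith
      exact squeeze_zero (fun n => A_nonneg n u d hu0.le hd0.le) hbound
        (tendsto_pow_atTop_nhds_zero_of_lt_one hc0 hc1)
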